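/- Let n ≥ 1, let μ be a real number, and let Λ and T be n×n unitary complex matrices satisfying 2μΛ = [[Λ,Λ†],Λ] + [[Λ,T],T†] + [[Λ,T†],T] and 2μT = [[T,T†],T] + [[T,Λ],Λ†] + [[T,Λ†],Λ]. Then 0 ≤ μ ≤ 4. Equivalently, if μ < 0 or μ > 4 there exists no unitary representation of U₄(A) with Spec(A) = {μ}. -/

import Mathlib

open scoped Matrix BigOperators

/-- The commutator `[A,B] = AB − BA` of square matrices. -/
noncomputable def matComm {n : ℕ} (A B : Matrix (Fin n) (Fin n) ℂ) : Matrix (Fin n) (Fin n) ℂ :=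
  A * B - B * A

/-- A unitary matrix has trace of absolute value at most `n`. -/
lemma abs_trace_le_of_unitary {n : ℕ} (U : Matrix (Fin n) (Fin n) ℂ)
    (hU : U ∈ Matrix.unitaryGroup (Fin n) ℂ) : ‖U.trace‖ ≤ n := by
  have h : U * Uᴴ = 1 := by
    simpa [Matrix.star_eq_conjTranspose] using hU.2
  have hdiag : ∀ i, ‖U i i‖ ≤ 1 := by
    intro i
    have h1 : ∑ j, Complex.normSq (U i j) = 1 := by
      have h2 := congrFun (congrFun h i) i
      simp only [Matrix.mul_apply, Matrix.conjTranspose_apply, Matrix.one_apply_eq] at h2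
      have h3 : ((∑ j, Complex.normSq (U i j) : ℝ) : ℂ) = 1 := by
        rw [Complex.ofReal_sum]
        simpa [Complex.mul_conj] using h2
      exact_mod_cast h3
    have hle : Complex.normSq (U i i) ≤ 1 := by
      rw [← h1]
      exact Finset.single_le_sum (fun j _ => Complex.normSq_nonneg _) (Finset.mem_univ i)
    have hsq := Complex.sq_norm (U i i)
    nlinarith [norm_nonneg (U i i)]
  calc ‖U.trace‖ ≤ ∑ i, ‖U i i‖ := by
        simpa [Matrix.trace] using norm_sum_le Finset.univ (fun i => U i i)
    _ ≤ ∑ _i : Fin n, (1 : ℝ) := Finset.sum_le_sum (fun i _ => hdiag i)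
    _ = n := by simp

theorem unitary_rep_spectrum_bounds (n : ℕ) (hn : 0 < n) (μ : ℝ)
    (Λ T : Matrix (Fin n) (Fin n) ℂ)
    (hΛ : Λ ∈ Matrix.unitaryGroup (Fin n) ℂ) (hT : T ∈ Matrix.unitaryGroup (Fin n) ℂ)
    (h1 : (2 * (μ : ℂ)) • Λ =
      matComm (matComm Λ Λᴴ) Λ + matComm (matComm Λ T) Tᴴ + matComm (matComm Λ Tᴴ) T)
    (h2 : (2 * (μ : ℂ)) • T =
      matComm (matComm T Tᴴ) T + matComm (matComm T Λ) Λᴴ + matComm (matComm T Λᴴ) Λ) :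
    0 ≤ μ ∧ μ ≤ 4 := by
  have hΛ1 : Λᴴ * Λ = 1 := by simpa [Matrix.star_eq_conjTranspose] using hΛ.1
  have hΛ2 : Λ * Λᴴ = 1 := by simpa [Matrix.star_eq_conjTranspose] using hΛ.2
  have hT1 : Tᴴ * T = 1 := by simpa [Matrix.star_eq_conjTranspose] using hT.1
  have hT2 : T * Tᴴ = 1 := by simpa [Matrix.star_eq_conjTranspose] using hT.2
  have hΛ1' : ∀ X : Matrix (Fin n) (Fin n) ℂ, Λᴴ * (Λ * X) = X := fun X => by
    rw [← mul_assoc, hΛ1, one_mul]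
  have hΛ2' : ∀ X : Matrix (Fin n) (Fin n) ℂ, Λ * (Λᴴ * X) = X := fun X => by
    rw [← mul_assoc, hΛ2, one_mul]
  have hT1' : ∀ X : Matrix (Fin n) (Fin n) ℂ, Tᴴ * (T * X) = X := fun X => by
    rw [← mul_assoc, hT1, one_mul]
  have hT2' : ∀ X : Matrix (Fin n) (Fin n) ℂ, T * (Tᴴ * X) = X := fun X => by
    rw [← mul_assoc, hT2, one_mul]
  -- simplify the RHS of h1
  have hA : matComm (matComm Λ Λᴴ) Λ + matComm (matComm Λ T) Tᴴ + matComm (matComm Λ Tᴴ) T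
      = Λ + Λ + Λ + Λ - T * (Λ * Tᴴ) - T * (Λ * Tᴴ) - Tᴴ * (Λ * T) - Tᴴ * (Λ * T) := by
    simp only [matComm, sub_mul, mul_sub, mul_assoc, hΛ1, hΛ2, hT1, hT2, hΛ1', hΛ2', hT1',
      hT2', one_mul, mul_one]
    abel
  rw [hA] at h1
  -- multiply on the right by Λᴴ
  have h1' := congrArg (· * Λᴴ) h1
  simp only [Matrix.smul_mul, sub_mul, add_mul, mul_assoc, hΛ2] at h1'
  -- take traces
  have htr := congrArg Matrix.trace h1'
  simp only [Matrix.trace_smul, Matrix.trace_sub, Matrix.trace_add, Matrix.trace_one] at htr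
  set U1 : Matrix (Fin n) (Fin n) ℂ := T * (Λ * (Tᴴ * Λᴴ)) with hU1def
  set U2 : Matrix (Fin n) (Fin n) ℂ := Tᴴ * (Λ * (T * Λᴴ)) with hU2def
  have hkey : ((2 : ℂ) - μ) * n = U1.trace + U2.trace := by
    have : (2 * (μ : ℂ)) • (n : ℂ) = (n : ℂ) + n + n + n - U1.trace - U1.trace
        - U2.trace - U2.trace := by simpa [Matrix.trace_one] using htr
    rw [smul_eq_mul] at this
    linear_combination (-(1 : ℂ)/2) * this
  have habs : ‖((2 : ℂ) - μ) * n‖ ≤ 2 * n := by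
    rw [hkey]
    calc ‖U1.trace + U2.trace‖
        ≤ ‖U1.trace‖ + ‖U2.trace‖ := norm_add_le _ _
      _ ≤ (n : ℝ) + n := by
          have hTs : Tᴴ ∈ Matrix.unitaryGroup (Fin n) ℂ := by
            rw [← Matrix.star_eq_conjTranspose]; exact Unitary.star_mem hT
          have hΛs : Λᴴ ∈ Matrix.unitaryGroup (Fin n) ℂ := by
            rw [← Matrix.star_eq_conjTranspose]; exact Unitary.star_mem hΛ
          refine add_le_add (abs_trace_le_of_unitary U1 ?_) (abs_trace_le_of_unitary U2 ?_)
          · exact mul_mem hT (mul_mem hΛ (mul_mem hTs hΛs))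
          · exact mul_mem hTs (mul_mem hΛ (mul_mem hT hΛs))
      _ = 2 * n := by ring
  have hn' : (0 : ℝ) < n := Nat.cast_pos.mpr hn
  have h2μ : |2 - μ| ≤ 2 := by
    have : ‖(((2 : ℝ) - μ : ℝ) : ℂ)‖ * n ≤ 2 * n := by
      rw [← Complex.norm_natCast n, ← norm_mul]
      simpa [Complex.ofReal_sub] using habs
    rw [Complex.norm_real, Real.norm_eq_abs] at this
    exact le_of_mul_le_mul_right this hn'
  rw [abs_le] at h2μ
  constructor <;> linarith [h2μ.1, h2μ.2]
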